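/- Let A ∈ {-1,0,1}^{m×n} be a matrix with pairwise distinct columns and let t ∈ [0,1)^m be such that Δ_1(t+A) ≤ 1 and Δ_2(t+A) ≤ 1. Then for every subset E ⊆ {1,…,m}, at most two columns of A have support equal to E, where the support of a vector y ∈ ℝ^m is supp(y) = {j ∈ {1,…,m} : y_j ≠ 0}. -/

import Mathlib

open Matrix

/-- Every `k×k` minor of `A` is at most `c` in absolute value. -/
def MinorsLE {m n : ℕ} (k : ℕ) (A : Matrix (Fin m) (Fin n) ℝ) (c : ℝ) : Prop :=
  ∀ (f : Fin k ↪ Fin m) (g : Fin k ↪ Fin n), |(A.submatrix f g).det| ≤ c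

/-- `A` is totally 1-submodular: all its minors, of any size, are at most `1`
in absolute value. -/
def Totally1Submodular {m n : ℕ} (A : Matrix (Fin m) (Fin n) ℝ) : Prop :=
  ∀ k : ℕ, MinorsLE k A 1

/-- The shifted matrix `t + A`, whose columns are `t + A_j`. -/
def shiftMat {m n : ℕ} (t : Fin m → ℝ) (A : Matrix (Fin m) (Fin n) ℝ) :
    Matrix (Fin m) (Fin n) ℝ :=
  Matrix.of fun i j => t i + A i j

/-- All entries of `A` lie in `{-1, 0, 1}`. -/
def SignEntries {m n : ℕ} (A : Matrix (Fin m) (Fin n) ℝ) : Prop :=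
  ∀ i j, A i j = -1 ∨ A i j = 0 ∨ A i j = 1

/-- The data admissible for the shifted Heller constant `h_s(m)`: a translation vector
`t ∈ [0,1)^m \ {0}` and a matrix `A ∈ {-1,0,1}^{m×n}` with pairwise distinct columns
such that `t + A` is totally 1-submodular. -/
def ShiftedAdmissible (m n : ℕ) (t : Fin m → ℝ) (A : Matrix (Fin m) (Fin n) ℝ) : Prop :=
  (∀ i, 0 ≤ t i ∧ t i < 1) ∧ t ≠ 0 ∧ SignEntries A ∧
    Function.Injective A.transpose ∧ Totally1Submodular (shiftMat t A)

/-- Embedding of `Fin 1`. -/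
def emb1 {m : ℕ} (a : Fin m) : Fin 1 ↪ Fin m :=
  ⟨fun _ => a, fun x y _ => Subsingleton.elim x y⟩

/-- Embedding of `Fin 2` from two distinct points. -/
def emb2 {m : ℕ} (a b : Fin m) (h : a ≠ b) : Fin 2 ↪ Fin m :=
  ⟨![a, b], by
    intro x y hxy
    fin_cases x <;> fin_cases y <;> simp_all⟩

theorem emb1_apply {m : ℕ} (a : Fin m) (x : Fin 1) : emb1 a x = a := rfl

theorem stmt10 (m n : ℕ) (A : Matrix (Fin m) (Fin n) ℝ) (t : Fin m → ℝ)
    (hA : SignEntries A) (hcols : Function.Injective A.transpose)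
    (ht : ∀ i, 0 ≤ t i ∧ t i < 1)
    (h1 : MinorsLE 1 (shiftMat t A) 1) (h2 : MinorsLE 2 (shiftMat t A) 1)
    (E : Set (Fin m)) :
    Set.ncard {j : Fin n | ∀ i, A i j ≠ 0 ↔ i ∈ E} ≤ 2 := by
  -- If some entry is 1 then the shift there is 0.
  have tz : ∀ i j, A i j = 1 → t i = 0 := by
    intro i j hij
    have := h1 (emb1 i) (emb1 j)
    rw [Matrix.det_fin_one] at this
    simp only [Matrix.submatrix_apply, emb1_apply, Function.Embedding.coeFn_mk,
      shiftMat, Matrix.of_apply, hij] at this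
    have h' := abs_le.mp this
    have := (ht i).1
    linarith [h'.2]
  -- two distinct columns with support E are opposite on rows with t i = 0
  have opp : ∀ j j' : Fin n, (∀ i, A i j ≠ 0 ↔ i ∈ E) → (∀ i, A i j' ≠ 0 ↔ i ∈ E) →
      (∃ i₀, A i₀ j = 1 ∧ A i₀ j' = -1 ∧ j ≠ j') →
      ∀ i, t i = 0 → A i j' = -A i j := by
    intro j j' hj hj' ⟨i₀, hj1, hj'1, hne⟩ i hti
    by_cases hiz : A i j = 0
    · have : i ∉ E := fun hE => ((hj i).mpr hE) hiz
      have : A i j' = 0 := by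
        by_contra h; exact this ((hj' i).mp h)
      rw [hiz, this]; ring
    · have hiE : i ∈ E := (hj i).mp hiz
      have hiz' : A i j' ≠ 0 := (hj' i).mpr hiE
      by_cases hii : i = i₀
      · subst hii; rw [hj1, hj'1]
      · have ht0 : t i₀ = 0 := tz i₀ j hj1
        have hdet := h2 (emb2 i₀ i (fun h => hii h.symm)) (emb2 j j' hne)
        rw [Matrix.det_fin_two] at hdet
        simp only [Matrix.submatrix_apply, emb2, DFunLike.coe, Function.Embedding.coeFn_mk,
          shiftMat, Matrix.of_apply, Matrix.cons_val_zero, Matrix.cons_val_one,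
          Matrix.head_cons, hj1, hj'1, ht0, hti] at hdet
        have h' := abs_le.mp hdet
        rcases hA i j with h1' | h1' | h1' <;> rcases hA i j' with h2' | h2' | h2' <;>
          simp_all <;> linarith [h'.1, h'.2]
  -- a nonzero entry in a row with positive shift must be -1
  have neg : ∀ i j, 0 < t i → A i j ≠ 0 → A i j = -1 := by
    intro i j hti hij
    rcases hA i j with h | h | h
    · exact h
    · exact absurd h hij
    · exact absurd (tz i j h) (by linarith)
  by_contra hc
  push_neg at hc
  obtain ⟨j1, hj1, j2, hj2, j3, hj3, h12, h13, h23⟩ :=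
    (Set.two_lt_ncard (Set.toFinite _)).mp hc
  simp only [Set.mem_setOf_eq] at hj1 hj2 hj3
  -- find an oriented pivot for a pair of distinct columns with support E
  have pivot : ∀ j j' : Fin n, (∀ i, A i j ≠ 0 ↔ i ∈ E) → (∀ i, A i j' ≠ 0 ↔ i ∈ E) →
      j ≠ j' → (∃ i₀, A i₀ j = 1 ∧ A i₀ j' = -1 ∧ j ≠ j') ∨
        (∃ i₀, A i₀ j' = 1 ∧ A i₀ j = -1 ∧ j' ≠ j) := by
    intro j j' hj hj' hne
    have : A.transpose j ≠ A.transpose j' := fun h => hne (hcols h)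
    have : ∃ i₀, A i₀ j ≠ A i₀ j' := by
      by_contra h
      push_neg at h
      exact this (funext fun i => by simpa [Matrix.transpose_apply] using h i)
    obtain ⟨i₀, hi₀⟩ := this
    have hz : A i₀ j ≠ 0 := by
      intro h0
      have : i₀ ∉ E := fun hE => ((hj i₀).mpr hE) h0
      have : A i₀ j' = 0 := by
        by_contra h; exact this ((hj' i₀).mp h)
      exact hi₀ (by rw [h0, this])
    have hz' : A i₀ j' ≠ 0 := (hj' i₀).mpr ((hj i₀).mp hz)
    rcases hA i₀ j with h | h | h <;> rcases hA i₀ j' with h' | h' | h' <;>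
      first
        | exact absurd h hz | exact absurd h' hz'
        | exact absurd (h.trans h'.symm) hi₀
        | exact Or.inl ⟨i₀, h, h', hne⟩
        | exact Or.inr ⟨i₀, h', h, hne.symm⟩
  have key : ∀ j j' : Fin n, (∀ i, A i j ≠ 0 ↔ i ∈ E) → (∀ i, A i j' ≠ 0 ↔ i ∈ E) →
      j ≠ j' → ∀ i, t i = 0 → A i j' = -A i j := by
    intro j j' hj hj' hne i hti
    rcases pivot j j' hj hj' hne with hp | hp
    · exact opp j j' hj hj' hp i hti
    · have := opp j' j hj' hj hp i hti
      linarith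
  -- now columns j2 and j3 agree everywhere
  have heq : A.transpose j2 = A.transpose j3 := by
    funext i
    simp only [Matrix.transpose_apply]
    rcases eq_or_lt_of_le (ht i).1 with hti | hti
    · have e2 := key j1 j2 hj1 hj2 h12 i hti.symm
      have e3 := key j1 j3 hj1 hj3 h13 i hti.symm
      rw [e2, e3]
    · by_cases hiE : i ∈ E
      · rw [neg i j2 hti ((hj2 i).mpr hiE), neg i j3 hti ((hj3 i).mpr hiE)]
      · have z2 : A i j2 = 0 := by
          by_contra h; exact hiE ((hj2 i).mp h)
        have z3 : A i j3 = 0 := by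
          by_contra h; exact hiE ((hj3 i).mp h)
        rw [z2, z3]
  exact h23 (hcols heq)
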